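/- For j = 1, 2, ..., k, let A_j be an n_j×n_j nonnegative real matrix (all entries ≥ 0) with eigenvalues λ_{1j}, λ_{2j}, ..., λ_{n_j j} counted with multiplicity, and suppose for each j the vector u_j is a nonnegative (Perron–Frobenius) unit eigenvector of A_j corresponding to the eigenvalue λ_{1j}. Then for any nonnegative real constants ρ_{pq} (1 ≤ p, q ≤ k), the block matrix B whose (p,p) diagonal block is A_p + ρ_{pp} u_p u_pᵀ and whose (p,q) off-diagonal block (p ≠ q) is ρ_{pq} u_p u_qᵀ is a nonnegative matrix, and its eigenvalues are λ_{21}, ..., λ_{n₁1}, λ_{22}, ..., λ_{n₂2}, ..., λ_{2k}, ..., λ_{n_k k}, γ₁, ..., γ_k (counted with multiplicity), where γ₁, ..., γ_k are the eigenvalues of the nonnegative k×k matrix B̂ whose (p,p) entry is λ_{1p} + ρ_{pp} and whose (p,q) entry (p ≠ q) is ρ_{pq}. -/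

import Mathlib

open Matrix Polynomial

set_option maxHeartbeats 4000000
set_option synthInstance.maxHeartbeats 400000

lemma det_blockDiag' {k : ℕ} {m' : Fin k → Type*} [∀ j, Fintype (m' j)]
    [∀ j, DecidableEq (m' j)] {R : Type*} [CommRing R]
    (M : ∀ j, Matrix (m' j) (m' j) R) :
    (Matrix.blockDiagonal' M).det = ∏ j, (M j).det := by
  rw [(Matrix.blockTriangular_blockDiagonal' M).det_fintype]
  refine Finset.prod_congr rfl fun j _ => ?_
  let e : m' j ≃ { x : Σ i, m' i // x.1 = j } :=
    { toFun := fun i => ⟨⟨j, i⟩, rfl⟩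
      invFun := fun x => cast (congrArg m' x.2) x.1.2
      left_inv := fun i => rfl
      right_inv := fun x => by
        obtain ⟨⟨j', i⟩, h⟩ := x
        subst h
        rfl }
  rw [← Matrix.det_submatrix_equiv_self e]
  congr 1
  ext i i'
  simp [Matrix.toSquareBlock_def, e]

lemma detconv {m : Type*} [Fintype m] [DecidableEq m] (N : Matrix m m ℝ) :
    ((algebraMap ℝ[X] (RatFunc ℝ) X) • (1 : Matrix m m (RatFunc ℝ))
        - N.map (fun r => algebraMap ℝ[X] (RatFunc ℝ) (Polynomial.C r))).det
      = algebraMap ℝ[X] (RatFunc ℝ) N.charpoly := by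
  rw [Matrix.charpoly, RingHom.map_det]
  have h : ((algebraMap ℝ[X] (RatFunc ℝ) X) • (1 : Matrix m m (RatFunc ℝ))
        - N.map (fun r => algebraMap ℝ[X] (RatFunc ℝ) (Polynomial.C r)))
      = (Matrix.charmatrix N).map (algebraMap ℝ[X] (RatFunc ℝ)) := by
    ext i j
    by_cases h : i = j
    · subst h
      simp [Matrix.charmatrix_apply_eq, Matrix.map_apply, Matrix.smul_apply, Matrix.one_apply]
    · simp [Matrix.charmatrix_apply_ne _ _ _ h, Matrix.map_apply, Matrix.smul_apply,
        Matrix.one_apply, h]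
  rw [h]
  rfl

theorem stmt_7 (k : ℕ) (n : Fin k → ℕ)
    (A : ∀ j, Matrix (Fin (n j + 1)) (Fin (n j + 1)) ℝ)
    (hAnn : ∀ j, ∀ s t, 0 ≤ A j s t)
    (lam1 : Fin k → ℝ)
    (μ : ∀ j, Fin (n j) → ℂ)
    (hspec : ∀ j, ((A j).map Complex.ofReal).charpoly.roots
        = (lam1 j : ℂ) ::ₘ Finset.univ.val.map (μ j))
    (u : ∀ j, Fin (n j + 1) → ℝ)
    (hunn : ∀ j i, 0 ≤ u j i)
    (heig : ∀ j, (A j).mulVec (u j) = lam1 j • u j)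
    (hnorm : ∀ j, ∑ i, u j i ^ 2 = 1)
    (ρ : Fin k → Fin k → ℝ)
    (hρnn : ∀ p q, 0 ≤ ρ p q)
    (B : Matrix ((j : Fin k) × Fin (n j + 1)) ((j : Fin k) × Fin (n j + 1)) ℝ)
    (hB : ∀ x y : (j : Fin k) × Fin (n j + 1), B x y =
      (if h : x.1 = y.1 then A x.1 x.2 (Fin.cast (by rw [h]) y.2) else 0)
        + ρ x.1 y.1 * u x.1 x.2 * u y.1 y.2)
    (Bhat : Matrix (Fin k) (Fin k) ℝ)
    (hBhat : ∀ p q : Fin k, Bhat p q = (if p = q then lam1 p else 0) + ρ p q) :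
    (∀ x y, 0 ≤ B x y) ∧ (∀ p q, 0 ≤ Bhat p q) ∧
    (B.map Complex.ofReal).charpoly.roots
      = (Bhat.map Complex.ofReal).charpoly.roots
        + Finset.univ.val.bind fun j : Fin k => Finset.univ.val.map (μ j) := by
  have hlam : ∀ j, 0 ≤ lam1 j := by
    intro j
    obtain ⟨i, hi⟩ : ∃ i, u j i ≠ 0 := by
      by_contra h
      push_neg at h
      have := hnorm j
      simp [h] at this
    have hip : 0 < u j i := (hunn j i).lt_of_ne (Ne.symm hi)
    have h1 := congrFun (heig j) i
    simp only [Matrix.mulVec, dotProduct, Pi.smul_apply, smul_eq_mul] at h1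
    have h2 : 0 ≤ ∑ t, A j i t * u j t :=
      Finset.sum_nonneg fun t _ => mul_nonneg (hAnn j i t) (hunn j t)
    nlinarith
  refine ⟨?_, ?_, ?_⟩
  · intro x y
    rw [hB]
    refine add_nonneg ?_ (mul_nonneg (mul_nonneg (hρnn _ _) (hunn _ _)) (hunn _ _))
    split
    · exact hAnn _ _ _
    · exact le_refl 0
  · intro p q
    rw [hBhat]
    refine add_nonneg ?_ (hρnn p q)
    split
    · exact hlam p
    · exact le_refl 0
  · set F := RatFunc ℝ with hF
    set φ : ℝ[X] →+* F := algebraMap ℝ[X] F with hφdef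
    have hφ : Function.Injective φ := IsFractionRing.injective ℝ[X] F
    set ψ : ℝ →+* F := φ.comp Polynomial.C with hψdef
    set t : F := φ X with htdef
    set Af : ∀ j, Matrix (Fin (n j + 1)) (Fin (n j + 1)) F := fun j => (A j).map ψ with hAf
    set Uf : Matrix ((j : Fin k) × Fin (n j + 1)) (Fin k) F :=
      Matrix.of (fun x p => if p = x.1 then ψ (u x.1 x.2) else 0) with hUf
    set ρf : Matrix (Fin k) (Fin k) F := Matrix.of (fun p q => ψ (ρ p q)) with hρf
    set L : Matrix (Fin k) (Fin k) F :=
      t • 1 - Matrix.diagonal (fun j => ψ (lam1 j)) with hL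
    set M : Matrix ((j : Fin k) × Fin (n j + 1)) ((j : Fin k) × Fin (n j + 1)) F :=
      t • 1 - Matrix.blockDiagonal' Af with hM
    -- U^T U = 1
    have hUU : Ufᵀ * Uf = 1 := by
      ext p q
      rw [Matrix.mul_apply, ← Finset.univ_sigma_univ, Finset.sum_sigma]
      have key : ∀ j ∈ Finset.univ,
          (∑ i : Fin (n j + 1), Ufᵀ p ⟨j, i⟩ * Uf ⟨j, i⟩ q)
            = if p = j then (if q = j then 1 else 0) else 0 := by
        intro j _
        by_cases h1 : p = j
        · by_cases h2 : q = j
          · rw [if_pos h1, if_pos h2]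
            have he : ∀ i : Fin (n j + 1), Ufᵀ p ⟨j, i⟩ * Uf ⟨j, i⟩ q = ψ (u j i ^ 2) := by
              intro i
              simp only [Matrix.transpose_apply, hUf, Matrix.of_apply, if_pos h1, if_pos h2]
              rw [pow_two, _root_.map_mul]
            rw [Finset.sum_congr rfl fun i _ => he i, ← _root_.map_sum, hnorm j, _root_.map_one]
          · rw [if_pos h1, if_neg h2]
            refine Finset.sum_eq_zero fun i _ => ?_
            simp only [Matrix.transpose_apply, hUf, Matrix.of_apply, if_neg h2, mul_zero]
        · rw [if_neg h1]
          refine Finset.sum_eq_zero fun i _ => ?_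
          simp only [Matrix.transpose_apply, hUf, Matrix.of_apply, if_neg h1, zero_mul]
      rw [Finset.sum_congr rfl key, Finset.sum_ite_eq, if_pos (Finset.mem_univ p)]
      simp [Matrix.one_apply, eq_comm]
    -- block diagonal times U
    have hAU : Matrix.blockDiagonal' Af * Uf
        = Uf * Matrix.diagonal (fun j => ψ (lam1 j)) := by
      ext x p
      obtain ⟨j, i⟩ := x
      rw [Matrix.mul_apply, ← Finset.univ_sigma_univ, Finset.sum_sigma, Matrix.mul_diagonal]
      have key : ∀ j' ∈ Finset.univ,
          (∑ i' : Fin (n j' + 1), Matrix.blockDiagonal' Af ⟨j, i⟩ ⟨j', i'⟩ * Uf ⟨j', i'⟩ p)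
            = if j = j' then (if p = j then ψ (lam1 j * u j i) else 0) else 0 := by
        intro j' _
        by_cases hj : j = j'
        · subst hj
          rw [if_pos rfl]
          by_cases hp : p = j
          · rw [if_pos hp]
            have he : ∀ i', Matrix.blockDiagonal' Af ⟨j, i⟩ ⟨j, i'⟩ * Uf ⟨j, i'⟩ p
                = ψ (A j i i' * u j i') := by
              intro i'
              rw [Matrix.blockDiagonal'_apply_eq]
              simp only [hUf, Matrix.of_apply, if_pos hp, hAf, Matrix.map_apply]
              rw [_root_.map_mul]
            rw [Finset.sum_congr rfl fun i' _ => he i', ← _root_.map_sum]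
            congr 1
            have h1 := congrFun (heig j) i
            simpa [Matrix.mulVec, dotProduct] using h1
          · rw [if_neg hp]
            refine Finset.sum_eq_zero fun i' _ => ?_
            simp only [hUf, Matrix.of_apply, if_neg hp, mul_zero]
        · rw [if_neg hj]
          refine Finset.sum_eq_zero fun i' _ => ?_
          rw [Matrix.blockDiagonal'_apply_ne _ _ _ hj, zero_mul]
      rw [Finset.sum_congr rfl key, Finset.sum_ite_eq, if_pos (Finset.mem_univ j)]
      by_cases hp : p = j
      · rw [if_pos hp]
        simp only [hUf, Matrix.of_apply, if_pos hp]
        rw [_root_.map_mul, hp]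
        ring
      · rw [if_neg hp]
        simp only [hUf, Matrix.of_apply, if_neg hp, zero_mul]
    have hMU : M * Uf = Uf * L := by
      rw [hM, hL, Matrix.sub_mul, Matrix.mul_sub, hAU, Matrix.smul_mul, Matrix.one_mul,
        Matrix.mul_smul, Matrix.mul_one]
    -- B over F
    have hBf : B.map ψ = Matrix.blockDiagonal' Af + Uf * ρf * Ufᵀ := by
      ext x y
      obtain ⟨j, i⟩ := x
      obtain ⟨j', i'⟩ := y
      rw [Matrix.map_apply, hB, map_add]
      rw [Matrix.add_apply]
      congr 1
      · by_cases h : j = j'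
        · subst h
          rw [Matrix.blockDiagonal'_apply_eq]
          simp [hAf, Matrix.map_apply]
        · rw [Matrix.blockDiagonal'_apply_ne _ _ _ h]
          simp only [h, dif_neg, not_false_iff, map_zero]
      · rw [Matrix.mul_apply]
        have he : ∀ q, (Uf * ρf) ⟨j, i⟩ q * Ufᵀ q ⟨j', i'⟩
            = if q = j' then (Uf * ρf) ⟨j, i⟩ q * ψ (u j' i') else 0 := by
          intro q
          simp only [Matrix.transpose_apply, hUf, Matrix.of_apply]
          split
          · rfl
          · rw [mul_zero]
        rw [Finset.sum_congr rfl fun q _ => he q, Finset.sum_ite_eq',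
          if_pos (Finset.mem_univ j')]
        have he2 : (Uf * ρf) ⟨j, i⟩ j' = ψ (u j i) * ψ (ρ j j') := by
          rw [Matrix.mul_apply]
          have he3 : ∀ p, Uf ⟨j, i⟩ p * ρf p j'
              = if p = j then ψ (u j i) * ψ (ρ j j') else 0 := by
            intro p
            simp only [hUf, hρf, Matrix.of_apply]
            by_cases hp : p = j
            · rw [if_pos hp, if_pos hp, hp]
            · rw [if_neg hp, if_neg hp, zero_mul]
          rw [Finset.sum_congr rfl fun p _ => he3 p, Finset.sum_ite_eq',
            if_pos (Finset.mem_univ j)]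
        rw [he2, _root_.map_mul, _root_.map_mul]
        ring
    -- determinant of L
    have hdetL : L.det = φ (∏ j, (X - Polynomial.C (lam1 j))) := by
      have h : L = Matrix.diagonal (fun j => t - ψ (lam1 j)) := by
        rw [hL, Matrix.smul_one_eq_diagonal, Matrix.diagonal_sub]
      rw [h, Matrix.det_diagonal, map_prod]
      refine Finset.prod_congr rfl fun j _ => ?_
      rw [map_sub]
      rfl
    have hLunit : IsUnit L.det := by
      rw [hdetL, isUnit_iff_ne_zero, Ne, map_eq_zero_iff φ hφ]
      exact Finset.prod_ne_zero_iff.mpr fun j _ => X_sub_C_ne_zero (lam1 j)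
    -- determinant of M
    have hdetM : M.det = φ (∏ j, (A j).charpoly) := by
      have h : M = Matrix.blockDiagonal' (fun j => t • 1 - Af j) := by
        ext x y
        obtain ⟨j, i⟩ := x
        obtain ⟨j', i'⟩ := y
        by_cases hj : j = j'
        · subst hj
          rw [Matrix.blockDiagonal'_apply_eq]
          simp [hM, Matrix.sub_apply, Matrix.smul_apply, Matrix.one_apply,
            Matrix.blockDiagonal'_apply_eq, Sigma.mk.inj_iff]
        · rw [Matrix.blockDiagonal'_apply_ne _ _ _ hj]
          have hne : (⟨j, i⟩ : (j : Fin k) × Fin (n j + 1)) ≠ ⟨j', i'⟩ := by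
            intro hc
            exact hj (congrArg Sigma.fst hc)
          simp [hM, Matrix.sub_apply, Matrix.smul_apply, Matrix.one_apply_ne hne,
            Matrix.blockDiagonal'_apply_ne _ _ _ hj]
      rw [h, det_blockDiag', map_prod]
      exact Finset.prod_congr rfl fun j _ => detconv (A j)
    have hMunit : IsUnit M.det := by
      rw [hdetM, isUnit_iff_ne_zero, Ne, map_eq_zero_iff φ hφ]
      exact Finset.prod_ne_zero_iff.mpr fun j _ => (A j).charpoly_monic.ne_zero
    -- Bhat over F
    have hBhatf : t • (1 : Matrix (Fin k) (Fin k) F) - Bhat.map ψ = L - ρf := by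
      ext p q
      rw [hL]
      by_cases h : p = q
      · subst h
        simp only [Matrix.sub_apply, Matrix.smul_apply, Matrix.one_apply_eq, smul_eq_mul,
          mul_one, Matrix.map_apply, hBhat, hρf, Matrix.of_apply, map_add,
          Matrix.diagonal_apply_eq, if_pos rfl, if_true]
        ring
      · simp only [Matrix.sub_apply, Matrix.smul_apply, Matrix.one_apply_ne h, smul_eq_mul,
          mul_zero, Matrix.map_apply, hBhat, hρf, Matrix.of_apply, map_add,
          Matrix.diagonal_apply_ne _ h, if_neg h, map_zero]
        ring
    -- inverse relation
    have hMinvU : M⁻¹ * Uf = Uf * L⁻¹ := by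
      have h2 : M⁻¹ * (M * Uf) = Uf := by
        rw [← Matrix.mul_assoc, Matrix.nonsing_inv_mul M hMunit, Matrix.one_mul]
      rw [hMU] at h2
      have h3 := congrArg (fun Z => Z * L⁻¹) h2
      rw [Matrix.mul_assoc M⁻¹ (Uf * L) L⁻¹, Matrix.mul_assoc Uf L L⁻¹,
        Matrix.mul_nonsing_inv L hLunit, Matrix.mul_one] at h3
      exact h3
    -- the key determinant identity
    have key : (t • 1 - B.map ψ).det * L.det = M.det * (t • 1 - Bhat.map ψ).det := by
      have h1 : t • (1 : Matrix _ _ F) - B.map ψ = M - Uf * ρf * Ufᵀ := by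
        rw [hBf, hM, sub_add_eq_sub_sub]
      have h2 : M - Uf * ρf * Ufᵀ = M * (1 - M⁻¹ * (Uf * ρf * Ufᵀ)) := by
        rw [Matrix.mul_sub, Matrix.mul_one, ← Matrix.mul_assoc,
          Matrix.mul_nonsing_inv M hMunit, Matrix.one_mul]
      have h3 : M⁻¹ * (Uf * ρf * Ufᵀ) = (M⁻¹ * Uf) * (ρf * Ufᵀ) := by
        rw [Matrix.mul_assoc Uf ρf Ufᵀ, ← Matrix.mul_assoc]
      have h4 : (1 - (M⁻¹ * Uf) * (ρf * Ufᵀ)).det = (1 - (ρf * Ufᵀ) * (M⁻¹ * Uf)).det :=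
        Matrix.det_one_sub_mul_comm _ _
      have h5 : (ρf * Ufᵀ) * (M⁻¹ * Uf) = ρf * L⁻¹ := by
        rw [hMinvU, Matrix.mul_assoc ρf Ufᵀ (Uf * L⁻¹), ← Matrix.mul_assoc Ufᵀ Uf L⁻¹,
          hUU, Matrix.one_mul]
      have h6 : (1 : Matrix (Fin k) (Fin k) F) - ρf * L⁻¹ = (L - ρf) * L⁻¹ := by
        rw [Matrix.sub_mul, Matrix.mul_nonsing_inv L hLunit]
      rw [h1, h2, Matrix.det_mul, h3, h4, h5, h6, Matrix.det_mul, ← hBhatf]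
      rw [Matrix.det_nonsing_inv, Ring.inverse_eq_inv']
      have hLne : L.det ≠ 0 := hLunit.ne_zero
      rw [mul_assoc, mul_assoc, inv_mul_cancel₀ hLne, mul_one]
    -- polynomial identity over ℝ[X]
    have hpoly : B.charpoly * ∏ j, (X - Polynomial.C (lam1 j))
        = (∏ j, (A j).charpoly) * Bhat.charpoly := by
      apply hφ
      rw [_root_.map_mul, _root_.map_mul, ← detconv B, ← detconv Bhat, ← hdetL, ← hdetM]
      exact key
    -- map to ℂ
    have hmap := congrArg (Polynomial.map Complex.ofRealHom) hpoly
    rw [Polynomial.map_mul, Polynomial.map_mul, Polynomial.map_prod, Polynomial.map_prod,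
      ← Matrix.charpoly_map, ← Matrix.charpoly_map] at hmap
    have hprodA : ∀ j : Fin k, ((A j).charpoly).map Complex.ofRealHom
        = ((A j).map Complex.ofReal).charpoly := by
      intro j
      rw [← Matrix.charpoly_map]
      rfl
    have hmap2 : ∀ j : Fin k, ((X : ℝ[X]) - Polynomial.C (lam1 j)).map Complex.ofRealHom
        = (X - Polynomial.C ((lam1 j : ℂ))) := by
      intro j
      rw [Polynomial.map_sub, Polynomial.map_X, Polynomial.map_C]
      rfl
    rw [Finset.prod_congr rfl fun j _ => hmap2 j,
      Finset.prod_congr rfl fun j _ => hprodA j] at hmap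
    have hcast : (B.map ⇑Complex.ofRealHom).charpoly = (B.map Complex.ofReal).charpoly := rfl
    have hcast2 : (Bhat.map ⇑Complex.ofRealHom).charpoly
        = (Bhat.map Complex.ofReal).charpoly := rfl
    rw [hcast, hcast2] at hmap
    -- take roots
    have hroots := congrArg Polynomial.roots hmap
    have hPne : (B.map Complex.ofReal).charpoly ≠ 0 := (Matrix.charpoly_monic _).ne_zero
    have hBhne : (Bhat.map Complex.ofReal).charpoly ≠ 0 := (Matrix.charpoly_monic _).ne_zero
    have hProdne : (∏ j, ((X : ℂ[X]) - Polynomial.C ((lam1 j : ℂ)))) ≠ 0 :=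
      Finset.prod_ne_zero_iff.mpr fun j _ => X_sub_C_ne_zero _
    have hAne : (∏ j, ((A j).map Complex.ofReal).charpoly) ≠ 0 :=
      Finset.prod_ne_zero_iff.mpr fun j _ => (Matrix.charpoly_monic _).ne_zero
    rw [Polynomial.roots_mul (mul_ne_zero hPne hProdne),
      Polynomial.roots_mul (mul_ne_zero hAne hBhne),
      Polynomial.roots_prod _ _ hProdne, Polynomial.roots_prod _ _ hAne] at hroots
    simp only [Polynomial.roots_X_sub_C] at hroots
    rw [Multiset.bind_singleton] at hroots
    have hbind : (Finset.univ.val.bind fun j : Fin k =>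
        ((A j).map Complex.ofReal).charpoly.roots)
        = Finset.univ.val.map (fun j : Fin k => (lam1 j : ℂ))
          + Finset.univ.val.bind fun j : Fin k => Finset.univ.val.map (μ j) := by
      rw [Multiset.bind_congr fun j _ => hspec j]
      exact Multiset.bind_cons _ (fun j : Fin k => (lam1 j : ℂ)) (fun j : Fin k => Finset.univ.val.map (μ j))
    rw [hbind] at hroots
    -- cancel
    have hfin : (B.map Complex.ofReal).charpoly.roots
          + Finset.univ.val.map (fun j : Fin k => (lam1 j : ℂ))
        = ((Bhat.map Complex.ofReal).charpoly.roots
            + Finset.univ.val.bind fun j : Fin k => Finset.univ.val.map (μ j))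
          + Finset.univ.val.map (fun j : Fin k => (lam1 j : ℂ)) := by
      rw [hroots]
      simp only [add_comm, add_left_comm, add_assoc]
    exact add_right_cancel hfin
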